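/- Let C be a left- and right-cancellative category that is right-Noetherian and admits local right lcms. Then any nonempty family of morphisms of C with the same source has a left gcd, i.e. a common left divisor that is left-divided by every common left divisor of the family. -/
import Mathlib


open CategoryTheory

/-- In a left- and right-cancellative category which is right-Noetherian and admits local
right lcms, any nonempty family of morphisms with the same source has a left gcd. -/
theorem left_gcd_exists_of_rightNoetherian_localRightLcm
    {C : Type*} [Category C]
    (hl : ∀ {X Y Z : C} (g : X ⟶ Y) (f h : Y ⟶ Z), g ≫ f = g ≫ h → f = h)
    (hr : ∀ {X Y Z : C} (f h : X ⟶ Y) (g : Y ⟶ Z), f ≫ g = h ≫ g → f = h)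
    -- right-Noetherian: no infinite sequence of proper right divisions
    (noeth : ¬ ∃ (T : C) (X : ℕ → C) (f : ∀ i, X i ⟶ T) (h : ∀ i, X i ⟶ X (i + 1)),
      ∀ i, f i = h i ≫ f (i + 1) ∧
        ¬ ∃ ε : X i ⟶ X (i + 1), IsIso ε ∧ f i = ε ≫ f (i + 1))
    -- local right lcms
    (loclcm : ∀ {A X Y : C} (x : A ⟶ X) (y : A ⟶ Y),
      (∃ (T : C) (t : A ⟶ T), (∃ u, t = x ≫ u) ∧ (∃ u, t = y ≫ u)) →
      ∃ (Z : C) (z : A ⟶ Z), (∃ u, z = x ≫ u) ∧ (∃ u, z = y ≫ u) ∧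
        ∀ {T : C} (t : A ⟶ T), (∃ u, t = x ≫ u) → (∃ u, t = y ≫ u) → ∃ u, t = z ≫ u)
    {ι : Type*} [Nonempty ι] {A : C} (T : ι → C) (f : ∀ i, A ⟶ T i) :
    ∃ (D : C) (d : A ⟶ D), (∀ i, ∃ u, f i = d ≫ u) ∧
      ∀ {E : C} (e : A ⟶ E), (∀ i, ∃ u, f i = e ≫ u) → ∃ u, d = e ≫ u := by
  classical
  by_contra hcon
  push_neg at hcon
  obtain ⟨i₀⟩ := ‹Nonempty ι›
  -- the type of common left divisors
  set P : (Σ D : C, A ⟶ D) → Prop := fun p => ∀ i, ∃ u, f i = p.2 ≫ u with hP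
  -- strict step
  have step : ∀ p : Σ D : C, A ⟶ D, P p →
      ∃ q : Σ D : C, A ⟶ D, P q ∧ (∃ c : p.1 ⟶ q.1, q.2 = p.2 ≫ c) ∧
        ∀ ε : p.1 ⟶ q.1, IsIso ε → q.2 ≠ p.2 ≫ ε := by
    rintro ⟨D, d⟩ hp
    obtain ⟨E, e, he, hnot⟩ := hcon D d hp
    obtain ⟨Z, z, ⟨c, hc⟩, ⟨v, hv⟩, hlcm⟩ := loclcm d e
      ⟨T i₀, f i₀, hp i₀, he i₀⟩
    refine ⟨⟨Z, z⟩, fun i => hlcm (f i) (hp i) (he i), ⟨c, hc⟩, ?_⟩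
    intro ε hε hzε
    dsimp at hzε
    exact hnot (v ≫ inv ε) (by rw [← Category.assoc, ← hv, hzε, Category.assoc,
      IsIso.hom_inv_id, Category.comp_id])
  -- build the infinite sequence
  let seq : ℕ → {p : Σ D : C, A ⟶ D // P p} := fun n =>
    Nat.rec ⟨⟨A, 𝟙 A⟩, fun i => ⟨f i, by simp⟩⟩
      (fun _ s => ⟨Classical.choose (step s.1 s.2),
        (Classical.choose_spec (step s.1 s.2)).1⟩) n
  have hstep : ∀ n, (∃ c : (seq n).1.1 ⟶ (seq (n+1)).1.1,
        (seq (n+1)).1.2 = (seq n).1.2 ≫ c) ∧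
      ∀ ε : (seq n).1.1 ⟶ (seq (n+1)).1.1, IsIso ε →
        (seq (n+1)).1.2 ≠ (seq n).1.2 ≫ ε := fun n =>
    (Classical.choose_spec (step (seq n).1 (seq n).2)).2
  let u : ∀ n, (seq n).1.1 ⟶ T i₀ := fun n => Classical.choose ((seq n).2 i₀)
  have hu : ∀ n, f i₀ = (seq n).1.2 ≫ u n := fun n =>
    Classical.choose_spec ((seq n).2 i₀)
  let c : ∀ n, (seq n).1.1 ⟶ (seq (n+1)).1.1 := fun n =>
    Classical.choose (hstep n).1
  have hc : ∀ n, (seq (n+1)).1.2 = (seq n).1.2 ≫ c n := fun n =>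
    Classical.choose_spec (hstep n).1
  refine noeth ⟨T i₀, fun n => (seq n).1.1, u, c, fun n => ⟨?_, ?_⟩⟩
  · refine hl (seq n).1.2 _ _ ?_
    rw [← hu n, ← Category.assoc, ← hc n, ← hu (n+1)]
  · rintro ⟨ε, hε, hεeq⟩
    refine (hstep n).2 ε hε ?_
    refine hr _ _ (u (n+1)) ?_
    rw [← hu (n+1), Category.assoc, ← hεeq, ← hu n]
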